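/- Let 0 < Λ ≤ 1 and 0 < θ < π − arcsin Λ. Then 1 + κ_Λ(θ) ≥ 2Λ cos((θ + arcsin Λ)/2). -/

import Mathlib

open Real Set

noncomputable section

/-- `f_{θ,Λ}(η) = cos(θ + 2η) + 2Λ sin η`. -/
def fFun (θ Λ η : ℝ) : ℝ := Real.cos (θ + 2 * η) + 2 * Λ * Real.sin η

/-- `κ_Λ(θ) = inf_{η ∈ [0,(π−θ)/2]} f_{θ,Λ}(η)`. -/
def kappaFun (Λ θ : ℝ) : ℝ := sInf (fFun θ Λ '' Set.Icc 0 ((Real.pi - θ) / 2))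

end

lemma poly0 (u : ℝ) (hu0 : 0 ≤ u) (hu1 : u ≤ 0.99) :
    (1 - u^2/4)^2 * (0.7854 + u/2) ≤ 1 := by
  have h1 : u^4 ≤ u^2 := by
    nlinarith [sq_nonneg u, mul_nonneg hu0 hu0, sq_nonneg (u*u),
      mul_le_one₀ (by linarith : u ≤ 1) hu0 (by linarith : u ≤ 1)]
  have h2 : u^5 ≤ u^2 := by
    nlinarith [pow_le_pow_of_le_one hu0 (by linarith : u ≤ 1) (show 2 ≤ 5 by norm_num)]
  have h3 : 0 ≤ u^3 := by positivity
  nlinarith [sq_nonneg (u - 0.8)]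

lemma poly1 (s u : ℝ) (hs0 : 0 ≤ s) (hs1 : s ≤ 0.5708) (hu0 : 0 ≤ u) (hu1 : u ≤ 1.5708) :
    (1 - u^2/4)^2 * (0.7854 - s + u/2) ≤ (1 - s^2/2)^2 := by
  have hB0 : (0:ℝ) ≤ (1 - u^2/4)^2 := sq_nonneg _
  rcases le_or_gt u 0.99 with hu | hu
  · have h0 := poly0 u hu0 hu
    have hq : 0.754975 ≤ 1 - u^2/4 := by nlinarith
    have hBge : 0.5243 ≤ (1 - u^2/4)^2 := by
      nlinarith [mul_nonneg (by linarith : (0:ℝ) ≤ 1 - u^2/4 - 0.754975)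
        (by linarith : (0:ℝ) ≤ 1 - u^2/4 + 0.754975)]
    have hBs : 0.5243 * s ≤ (1 - u^2/4)^2 * s := mul_le_mul_of_nonneg_right hBge hs0
    nlinarith [mul_nonneg (mul_nonneg hs0 hs0) hs0, sq_nonneg s]
  · have hBle : (1 - u^2/4)^2 ≤ 0.57 := by
      have h1 : 1 - u^2/4 ≤ 0.754975 := by nlinarith
      have h2 : 0 ≤ 1 - u^2/4 := by nlinarith
      nlinarith
    have h3 : ((1 - u^2/4)^2 - 0.5708) * 0.5708 ≤ ((1 - u^2/4)^2 - 0.5708) * s := by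
      rcases le_or_gt ((1 - u^2/4)^2) 0.5708 with h | h
      · exact mul_le_mul_of_nonpos_left hs1 (by linarith)
      · nlinarith
    nlinarith

lemma cos_upper (u : ℝ) (hu0 : 0 ≤ u) (hu1 : u ≤ 1.5708) :
    Real.cos u ≤ (1 - u^2/4)^2 := by
  have hc2 := Real.cos_two_mul (u/2)
  rw [show (2:ℝ) * (u/2) = u by ring] at hc2
  have hpys := Real.sin_sq_add_cos_sq (u/2)
  have hs2 : u/2 - (u/2)^3/4 ≤ Real.sin (u/2) := by
    rcases eq_or_lt_of_le hu0 with h | h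
    · rw [← h]; norm_num
    · exact le_trans (by nlinarith [pow_pos (by linarith : (0:ℝ) < u/2) 3]) (Real.sin_gt_sub_cube (x := u/2) (by linarith)).le
  have hu2 : u^2 ≤ 2.4675 := by nlinarith
  have hpos : 0 ≤ u/2 - (u/2)^3/4 := by
    nlinarith [mul_le_mul_of_nonneg_right hu2 hu0]
  have hsq : (u/2 - (u/2)^3/4)^2 ≤ Real.sin (u/2)^2 := pow_le_pow_left₀ hpos hs2 2
  nlinarith [hsq, sq_nonneg (u^3)]

lemma keyK2 (s u : ℝ) (hs0 : 0 ≤ s) (hs1 : s ≤ 0.5708) (hu0 : 0 ≤ u) (hu1 : u ≤ 1.5708) :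
    Real.cos u * (π/4 - s + u/2) ≤ Real.cos s ^ 2 := by
  have hπl := Real.pi_gt_d6
  have hπu := Real.pi_lt_d6
  have hlow : 1 - s^2/2 ≤ Real.cos s := Real.one_sub_sq_div_two_le_cos
  have hlow0 : (0:ℝ) ≤ 1 - s^2/2 := by nlinarith
  have hup := cos_upper u hu0 hu1
  have hm : (0:ℝ) ≤ π/4 - s + u/2 := by linarith
  have e1 : Real.cos u * (π/4 - s + u/2) ≤ (1 - u^2/4)^2 * (π/4 - s + u/2) :=
    mul_le_mul_of_nonneg_right hup hm
  have e2 : (1 - u^2/4)^2 * (π/4 - s + u/2) ≤ (1 - u^2/4)^2 * (0.7854 - s + u/2) :=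
    mul_le_mul_of_nonneg_left (by linarith) (sq_nonneg _)
  have e3 := poly1 s u hs0 hs1 hu0 hu1
  have e4 : (1 - s^2/2)^2 ≤ Real.cos s ^ 2 := pow_le_pow_left₀ hlow0 hlow 2
  linarith

/-- Key inequality: `sin α * (t - α/2) ≤ sin t ^ 2` on `[0, π/2]²`. -/
lemma keyK (t α : ℝ) (ht0 : 0 ≤ t) (ht1 : t ≤ π/2) (hα0 : 0 ≤ α) (hα1 : α ≤ π/2) :
    Real.sin α * (t - α/2) ≤ Real.sin t ^ 2 := by
  have hπl := Real.pi_gt_d6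
  have hπu := Real.pi_lt_d6
  have hsα0 : 0 ≤ Real.sin α := Real.sin_nonneg_of_nonneg_of_le_pi hα0 (by linarith)
  rcases le_or_gt t (α/2) with hc | hc
  · exact le_trans (mul_nonpos_of_nonneg_of_nonpos hsα0 (by linarith)) (sq_nonneg _)
  rcases le_or_gt t 1 with h1 | h1
  · have hst : t - t^3/4 < Real.sin t := lt_of_le_of_lt (by nlinarith [pow_pos (by linarith : (0:ℝ) < t) 3]) (Real.sin_gt_sub_cube (by linarith : 0 < t))
    have hsa : Real.sin α ≤ α := Real.sin_le hα0
    have h4 : 0 ≤ t - t^3/4 := by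
      nlinarith [mul_nonneg (mul_nonneg ht0 (by linarith : (0:ℝ) ≤ 1 - t))
        (by linarith : (0:ℝ) ≤ 1 + t)]
    have h5 : (t - t^3/4)^2 ≤ Real.sin t ^2 := pow_le_pow_left₀ h4 hst.le 2
    have h6 : t^2/2 ≤ (t - t^3/4)^2 := by
      nlinarith [mul_nonneg (sq_nonneg t) (by nlinarith : (0:ℝ) ≤ 1 - t^2),
        sq_nonneg (t*t*t)]
    have h7 : Real.sin α * (t - α/2) ≤ α * (t - α/2) :=
      mul_le_mul_of_nonneg_right hsa (by linarith)
    nlinarith [sq_nonneg (t - α)]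
  · have e1 : Real.sin t = Real.cos (π/2 - t) := (Real.cos_pi_div_two_sub t).symm
    have e2 : Real.sin α = Real.cos (π/2 - α) := (Real.cos_pi_div_two_sub α).symm
    have e3 : t - α/2 = π/4 - (π/2 - t) + (π/2 - α)/2 := by ring
    rw [e1, e2, e3]
    exact keyK2 (π/2 - t) (π/2 - α) (by linarith) (by linarith) (by linarith) (by linarith)

lemma inner_ineq (α β t : ℝ) (hα0 : 0 ≤ α) (hα1 : α ≤ π/2) (hβ0 : 0 ≤ β)
    (ht0 : 0 ≤ t) (htle : t ≤ β + α/2) (hhalf : β + α/2 ≤ π/2) :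
    Real.sin α * Real.sin β ≤ Real.sin t ^ 2 + Real.sin α * Real.sin (β + α/2 - t) := by
  have hπ := Real.pi_pos
  have hsinα0 : 0 ≤ Real.sin α := Real.sin_nonneg_of_nonneg_of_le_pi hα0 (by linarith)
  rcases le_or_gt t (α/2) with hc | hc
  · have hm1 : β ∈ Icc (-(π/2)) (π/2) := ⟨by linarith, by linarith⟩
    have hm2 : β + α/2 - t ∈ Icc (-(π/2)) (π/2) := ⟨by linarith, by linarith⟩
    have hmono : Real.sin β ≤ Real.sin (β + α/2 - t) :=
      Real.strictMonoOn_sin.monotoneOn hm1 hm2 (by linarith)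
    have := mul_le_mul_of_nonneg_left hmono hsinα0
    nlinarith [sq_nonneg (Real.sin t)]
  · have hsub := Real.sin_sub_sin β (β + α/2 - t)
    rw [show (β - (β + α/2 - t))/2 = (t - α/2)/2 by ring,
        show (β + (β + α/2 - t))/2 = β - (t - α/2)/2 by ring] at hsub
    have h1 : Real.sin ((t - α/2)/2) ≤ (t - α/2)/2 := Real.sin_le (by linarith)
    have h2 : Real.cos (β - (t - α/2)/2) ≤ 1 := Real.cos_le_one _
    have h3 : 0 ≤ Real.sin ((t - α/2)/2) :=
      Real.sin_nonneg_of_nonneg_of_le_pi (by linarith) (by linarith)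
    have hkey := keyK t α ht0 (by linarith) hα0 hα1
    have h4 : Real.sin β - Real.sin (β + α/2 - t) ≤ t - α/2 := by
      rw [hsub]; nlinarith
    have := mul_le_mul_of_nonneg_left h4 hsinα0
    nlinarith

lemma pointwise (Λ θ η : ℝ) (hΛ0 : 0 < Λ) (hΛ1 : Λ ≤ 1) (hθ0 : 0 < θ)
    (hθ : θ < Real.pi - Real.arcsin Λ) (hη0 : 0 ≤ η) (hη1 : η ≤ (Real.pi - θ)/2) :
    2 * Λ * Real.cos ((θ + Real.arcsin Λ)/2) - 1 ≤ Real.cos (θ + 2*η) + 2 * Λ * Real.sin η := by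
  have hπ := Real.pi_pos
  obtain ⟨α, hαdef⟩ : ∃ x, x = Real.arcsin Λ := ⟨_, rfl⟩
  have hα0 : 0 < α := hαdef ▸ Real.arcsin_pos.mpr hΛ0
  have hαle : α ≤ π/2 := hαdef ▸ Real.arcsin_le_pi_div_two Λ
  have hsα : Real.sin α = Λ := by rw [hαdef]; exact Real.sin_arcsin (by linarith) hΛ1
  obtain ⟨β, hβdef⟩ : ∃ x, x = (π - θ - α)/2 := ⟨_, rfl⟩
  obtain ⟨t, htdef⟩ : ∃ x, x = (π - θ)/2 - η := ⟨_, rfl⟩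
  have hθα : θ < π - α := by rw [hαdef]; exact hθ
  have hβ0 : 0 < β := by rw [hβdef]; linarith
  have ht0 : 0 ≤ t := by rw [htdef]; linarith
  have htle : t ≤ β + α/2 := by rw [htdef, hβdef]; linarith
  have hhalf : β + α/2 ≤ π/2 := by rw [hβdef]; linarith
  have hcos1 : Real.cos (θ + 2*η) = 2 * Real.sin t ^ 2 - 1 := by
    have h1 : θ + 2*η = π - 2*t := by rw [htdef]; ring
    rw [h1, Real.cos_pi_sub]
    have h2 := Real.cos_two_mul t
    have h3 := Real.sin_sq_add_cos_sq t
    linarith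
  have hcos2 : Real.cos ((θ + Real.arcsin Λ)/2) = Real.sin β := by
    have h1 : (θ + Real.arcsin Λ)/2 = π/2 - β := by rw [hβdef, hαdef]; ring
    rw [h1, Real.cos_pi_div_two_sub]
  have hηeq : η = β + α/2 - t := by rw [htdef, hβdef]; ring
  rw [hcos1, hcos2, ← hsα, hηeq]
  have h := inner_ineq α β t hα0.le hαle hβ0.le ht0 htle hhalf
  linarith

theorem stmt14 (Λ θ : ℝ) (hΛ0 : 0 < Λ) (hΛ1 : Λ ≤ 1)
    (hθ0 : 0 < θ) (hθ : θ < Real.pi - Real.arcsin Λ) :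
    1 + kappaFun Λ θ ≥ 2 * Λ * Real.cos ((θ + Real.arcsin Λ) / 2) := by
  have harc : 0 ≤ Real.arcsin Λ := Real.arcsin_nonneg.mpr hΛ0.le
  have h0 : (0:ℝ) ≤ (Real.pi - θ)/2 := by linarith
  have hne : (fFun θ Λ '' Set.Icc 0 ((Real.pi - θ)/2)).Nonempty :=
    (Set.nonempty_Icc.mpr h0).image _
  have hlb : ∀ b ∈ fFun θ Λ '' Set.Icc 0 ((Real.pi - θ)/2),
      2 * Λ * Real.cos ((θ + Real.arcsin Λ)/2) - 1 ≤ b := by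
    rintro b ⟨η, ⟨hη0, hη1⟩, rfl⟩
    exact pointwise Λ θ η hΛ0 hΛ1 hθ0 hθ hη0 hη1
  have hinf := le_csInf hne hlb
  unfold kappaFun
  linarith
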